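/- Let \widetilde{H} = \mathbb{C} Y_\infty be the vector space spanned by planar binary trees, equipped with the associative 'over' product t/s and the co-product \Delta^\alpha and co-action \delta^\alpha defined recursively by \Delta^\alpha(|) = | \otimes |, \Delta^\alpha V(r) = | \otimes V(r) + \delta^\alpha V(r), \Delta^\alpha(r \vee s) = \Delta^\alpha(r) / \Delta^\alpha(V(s)), \delta^\alpha(|) = |\otimes|, \delta^\alpha V(r) = (V \otimes id)\delta^\alpha(r), \delta^\alpha(r\vee s) = \Delta^\alpha(r)/\delta^\alpha(V(s)). Let t_n = \sum_{|t|=n} t be the sum of all planar binary trees with n internal vertices. Then \Delta^\alpha(t_n) = \sum_{k=0}^{n} t_k \otimes Q_{n-k}^{(k)}(t) and \delta^\alpha(t_n) = \sum_{k=0}^{n} t_k \otimes Q_{n-k}^{(k-1)}(t), where Q_m^{(n)}(t) is the polynomial Q_m^{(n)} evaluated at the elements t_1, t_2, \ldots with the over product and t_0 = |. -/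

import Mathlib

noncomputable section

/-- Rooted planar binary trees. -/
inductive PBT : Type
  | leaf : PBT
  | node : PBT → PBT → PBT
deriving DecidableEq

/-- The number of internal vertices of a planar binary tree. -/
def PBT.size : PBT → ℕ
  | .leaf => 0
  | .node l r => l.size + r.size + 1

/-- `over t s = t / s`: grafting of the root of `t` on the left-most leaf of `s`. -/
def overT : PBT → PBT → PBT
  | t, .leaf => t
  | t, .node l r => .node (overT t l) r

theorem over_assoc : ∀ t s u : PBT, overT (overT t s) u = overT t (overT s u)
  | _, _, .leaf => rfl
  | t, s, .node l r => by simp [overT, over_assoc t s l]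

theorem leaf_over : ∀ s : PBT, overT .leaf s = s
  | .leaf => rfl
  | .node l r => by simp [overT, leaf_over l]

/-- Planar binary trees form a monoid under the `over` product, with unit the root tree `|`. -/
instance : Monoid PBT where
  mul := overT
  one := .leaf
  mul_assoc := over_assoc
  one_mul := leaf_over
  mul_one := fun _ => rfl

/-- The finite set `Y_n` of planar binary trees with `n` internal vertices. -/
def treesOf : ℕ → Finset PBT
  | 0 => {PBT.leaf}
  | n + 1 =>
    (Finset.range (n + 1)).attach.biUnion fun i =>
      ((treesOf i.1) ×ˢ (treesOf (n - i.1))).image fun p => PBT.node p.1 p.2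
decreasing_by
  all_goals
    have := i.2
    simp only [Finset.mem_range] at this
    omega

/-- `H̃ = ℂ Y_∞`, the vector space spanned by planar binary trees, as an algebra with the
`over` product: the monoid algebra of the monoid of planar binary trees. -/
abbrev HT : Type := MonoidAlgebra ℂ PBT

/-- `t_n`, the sum of all planar binary trees with `n` internal vertices. -/
def Tn (n : ℕ) : HT := ∑ t ∈ treesOf n, MonoidAlgebra.of ℂ PBT t

/-- `Q_m^{(k-1)}(t)`: the polynomial `Qt k m = ∑_{j_1+⋯+j_k = m} t_{j_1} / ⋯ / t_{j_k}`
(product = over product in `H̃`), so `Qt (n+1) m = Q_m^{(n)}(t)` and `Qt 0 m = δ_{m,0}`. -/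
def Qt (k m : ℕ) : HT :=
  ∑ j ∈ Finset.Nat.antidiagonalTuple k m, (List.ofFn fun i => Tn (j i)).prod

/-- The linear map `V : H̃ → H̃` induced by `V(t) = | ∨ t` on trees. -/
def Vlin : HT →ₗ[ℂ] HT :=
  MonoidAlgebra.mapDomainLinearMap ℂ ℂ (fun t : PBT => PBT.node .leaf t)

open TensorProduct in
/-- `Dd t = (Δ^α t, δ^α t)`: the co-product and co-action of `H̃` on the basis trees, defined
by the simultaneous recursion `Δ^α(|) = δ^α(|) = | ⊗ |`,
`Δ^α(r ∨ s) = Δ^α(r) / Δ^α(V(s))` with `Δ^α(V(s)) = | ⊗ V(s) + δ^α(V(s))`,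
`δ^α(r ∨ s) = Δ^α(r) / δ^α(V(s))` with `δ^α(V(s)) = (V ⊗ id)(δ^α(s))`. -/
def Dd : PBT → (HT ⊗[ℂ] HT) × (HT ⊗[ℂ] HT)
  | .leaf => (1, 1)
  | .node r s =>
    ((Dd r).1 * ((1 : HT) ⊗ₜ[ℂ] (MonoidAlgebra.of ℂ PBT (PBT.node .leaf s)) +
        (TensorProduct.map Vlin LinearMap.id) (Dd s).2),
     (Dd r).1 * (TensorProduct.map Vlin LinearMap.id) (Dd s).2)


section AuxLemmas

open Finset

theorem size_of_mem : ∀ n, ∀ t ∈ treesOf n, PBT.size t = n := by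
  intro n
  induction n using Nat.strong_induction_on with
  | _ n ih =>
    match n with
    | 0 => intro t ht; simp [treesOf] at ht; simp [ht, PBT.size]
    | n + 1 =>
      intro t ht
      rw [treesOf] at ht
      simp only [Finset.mem_biUnion, Finset.mem_attach, Finset.mem_image, Finset.mem_product,
        true_and] at ht
      obtain ⟨⟨i, hi⟩, ⟨⟨r, s⟩, ⟨hr, hs⟩, rfl⟩⟩ := ht
      simp only [Finset.mem_range] at hi
      have h1 := ih i (by omega) r hr
      have h2 := ih (n - i) (by omega) s hs
      simp only [PBT.size, h1, h2]
      omega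

theorem sum_treesOf_succ {M : Type*} [AddCommMonoid M] (n : ℕ) (f : PBT → M) :
    ∑ t ∈ treesOf (n + 1), f t =
      ∑ p ∈ Finset.HasAntidiagonal.antidiagonal n, ∑ r ∈ treesOf p.1, ∑ s ∈ treesOf p.2, f (PBT.node r s) := by
  have hdisj : (↑(Finset.range (n + 1)).attach :
      Set {x // x ∈ Finset.range (n + 1)}).PairwiseDisjoint
      (fun i => ((treesOf i.1) ×ˢ (treesOf (n - i.1))).image fun p => PBT.node p.1 p.2) := by
    intro x _ y _ hxy
    simp only [Function.onFun, Finset.disjoint_left]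
    intro t ht ht'
    simp only [Finset.mem_image, Finset.mem_product] at ht ht'
    obtain ⟨⟨r, s⟩, ⟨hr, _⟩, rfl⟩ := ht
    obtain ⟨⟨r', s'⟩, ⟨hr', _⟩, h⟩ := ht'
    cases h
    apply hxy
    have h1 := size_of_mem _ _ hr
    have h2 := size_of_mem _ _ hr'
    exact Subtype.ext (by omega)
  rw [treesOf, Finset.sum_biUnion hdisj,
    Finset.sum_attach (Finset.range (n + 1)) (fun i =>
      ∑ t ∈ ((treesOf i) ×ˢ (treesOf (n - i))).image fun p => PBT.node p.1 p.2, f t),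
    Finset.Nat.sum_antidiagonal_eq_sum_range_succ
      (fun a b => ∑ r ∈ treesOf a, ∑ s ∈ treesOf b, f (PBT.node r s))]
  refine Finset.sum_congr rfl fun i _ => ?_
  rw [Finset.sum_image (fun p _ q _ h => by cases p; cases q; simpa using h),
    Finset.sum_product]

theorem ad_shuffle {M : Type*} [AddCommMonoid M] (n : ℕ) (f : ℕ → ℕ → ℕ → M) :
    (∑ p ∈ antidiagonal n, ∑ q ∈ antidiagonal p.1, f q.1 q.2 p.2) =
      ∑ p ∈ antidiagonal n, ∑ q ∈ antidiagonal p.2, f p.1 q.1 q.2 := by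
  rw [Finset.sum_sigma', Finset.sum_sigma']
  refine Finset.sum_nbij' (fun x => ⟨(x.2.1, x.2.2 + x.1.2), (x.2.2, x.1.2)⟩)
    (fun x => ⟨(x.1.1 + x.2.1, x.2.2), (x.1.1, x.2.1)⟩) ?_ ?_ ?_ ?_ ?_ <;>
    rintro ⟨⟨i, j⟩, a, b⟩ hx <;>
    simp only [Finset.mem_sigma, Finset.HasAntidiagonal.mem_antidiagonal] at hx ⊢
  · exact ⟨by omega, trivial⟩
  · exact ⟨by omega, trivial⟩
  · rw [hx.2]
  · rw [hx.2]

theorem ad_shuffle4 {M : Type*} [AddCommMonoid M] (n : ℕ) (g : ℕ → ℕ → ℕ → ℕ → M) :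
    (∑ r ∈ antidiagonal n, ∑ p ∈ antidiagonal r.1, ∑ q ∈ antidiagonal r.2, g p.1 p.2 q.1 q.2) =
      ∑ r ∈ antidiagonal n, ∑ p ∈ antidiagonal r.1, ∑ q ∈ antidiagonal r.2, g p.1 q.1 p.2 q.2 := by
  rw [Finset.sum_sigma', Finset.sum_sigma', Finset.sum_sigma', Finset.sum_sigma']
  refine Finset.sum_nbij'
    (fun x => ⟨⟨(x.1.2.1 + x.2.1, x.1.2.2 + x.2.2), (x.1.2.1, x.2.1)⟩, (x.1.2.2, x.2.2)⟩)
    (fun x => ⟨⟨(x.1.2.1 + x.2.1, x.1.2.2 + x.2.2), (x.1.2.1, x.2.1)⟩, (x.1.2.2, x.2.2)⟩)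
    ?_ ?_ ?_ ?_ ?_ <;>
    rintro ⟨⟨⟨i, j⟩, a, m⟩, b, m'⟩ hx <;>
    simp only [Finset.mem_sigma, Finset.HasAntidiagonal.mem_antidiagonal] at hx ⊢
  · exact ⟨⟨by omega, trivial⟩, trivial⟩
  · exact ⟨⟨by omega, trivial⟩, trivial⟩
  · obtain ⟨⟨h1, h2⟩, h3⟩ := hx
    subst h2; subst h3; rfl
  · obtain ⟨⟨h1, h2⟩, h3⟩ := hx
    subst h2; subst h3; rfl

theorem treesOf_zero : treesOf 0 = {PBT.leaf} := by rw [treesOf]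

theorem Tn_zero : Tn 0 = 1 := by
  rw [Tn, treesOf_zero, Finset.sum_singleton]
  exact (congrArg (MonoidAlgebra.of ℂ PBT) (rfl : PBT.leaf = 1)).trans (map_one _)

theorem Vlin_of (t : PBT) :
    Vlin (MonoidAlgebra.of ℂ PBT t) = MonoidAlgebra.of ℂ PBT (PBT.node .leaf t) := by
  rw [Vlin]
  exact MonoidAlgebra.mapDomainLinearMap_single (R := ℂ) _ _ _

theorem Tn_succ (n : ℕ) :
    Tn (n + 1) = ∑ p ∈ antidiagonal n, Tn p.1 * Vlin (Tn p.2) := by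
  rw [Tn, sum_treesOf_succ]
  refine Finset.sum_congr rfl fun p _ => ?_
  rw [Tn, Tn, map_sum, Finset.sum_mul]
  refine Finset.sum_congr rfl fun r _ => ?_
  rw [Finset.mul_sum]
  refine Finset.sum_congr rfl fun s _ => ?_
  rw [Vlin_of, ← map_mul]
  congr 1

theorem Qt_zero_right (k : ℕ) : Qt k 0 = 1 := by
  rw [Qt, Finset.Nat.antidiagonalTuple_zero_right, Finset.sum_singleton]
  refine List.prod_eq_one fun x hx => ?_
  simp only [List.mem_ofFn] at hx
  obtain ⟨i, rfl⟩ := hx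
  exact Tn_zero

theorem Qt_zero_succ (m : ℕ) : Qt 0 (m + 1) = 0 := by
  rw [Qt, Finset.Nat.antidiagonalTuple_zero_succ, Finset.sum_empty]

theorem Qt_one (m : ℕ) : Qt 1 m = Tn m := by
  rw [Qt, Finset.Nat.antidiagonalTuple_one, Finset.sum_singleton]
  simp

theorem Qt_succ (k m : ℕ) :
    Qt (k + 1) m = ∑ p ∈ antidiagonal m, Tn p.1 * Qt k p.2 := by
  simp only [Qt, Finset.mul_sum]
  rw [Finset.sum_sigma']
  refine (Finset.sum_nbij'
    (fun x : (_ : ℕ × ℕ) × (Fin k → ℕ) => (Fin.cons x.1.1 x.2 : Fin (k + 1) → ℕ))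
    (fun j => ⟨(j 0, ∑ i, j (Fin.succ i)), Fin.tail j⟩) ?_ ?_ ?_ ?_ ?_).symm
  · rintro ⟨⟨a, b⟩, g⟩ hx
    simp only [Finset.mem_sigma, Finset.HasAntidiagonal.mem_antidiagonal,
      Finset.Nat.mem_antidiagonalTuple] at hx ⊢
    rw [Fin.sum_cons, hx.2, hx.1]
  · intro j hj
    simp only [Finset.Nat.mem_antidiagonalTuple, Finset.mem_sigma,
      Finset.HasAntidiagonal.mem_antidiagonal] at hj ⊢
    constructor
    · rw [← hj, Fin.sum_univ_succ]
    · rfl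
  · rintro ⟨⟨a, b⟩, g⟩ hx
    simp only [Finset.mem_sigma, Finset.HasAntidiagonal.mem_antidiagonal,
      Finset.Nat.mem_antidiagonalTuple] at hx
    simp only [Fin.cons_zero, Fin.tail_cons, Fin.cons_succ, hx.2]
  · intro j hj
    exact Fin.cons_self_tail j
  · rintro ⟨⟨a, b⟩, g⟩ hx
    rw [List.ofFn_succ, List.prod_cons]
    simp [Fin.cons_zero, Fin.cons_succ]

theorem Qt_mul (k k' : ℕ) : ∀ M : ℕ,
    (∑ p ∈ antidiagonal M, Qt k p.1 * Qt k' p.2) = Qt (k + k') M := by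
  induction k with
  | zero =>
    intro M
    rw [Finset.sum_eq_single (0, M)]
    · rw [Qt_zero_right, one_mul, Nat.zero_add]
    · rintro ⟨a, b⟩ hab hne
      simp only [Finset.HasAntidiagonal.mem_antidiagonal] at hab
      match a, hab with
      | 0, hab => exact absurd (by simp [← hab]) hne
      | a + 1, hab => rw [Qt_zero_succ, zero_mul]
    · intro h
      exact absurd (by simp) h
  | succ k ih =>
    intro M
    have step : ∀ p : ℕ × ℕ, p ∈ antidiagonal M → Qt (k + 1) p.1 * Qt k' p.2 =
        ∑ q ∈ antidiagonal p.1, Tn q.1 * (Qt k q.2 * Qt k' p.2) := by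
      intro p _
      rw [Qt_succ, Finset.sum_mul]
      exact Finset.sum_congr rfl fun q _ => mul_assoc _ _ _
    rw [Finset.sum_congr rfl step,
      ad_shuffle M (fun a b c => Tn a * (Qt k b * Qt k' c))]
    have step2 : ∀ p : ℕ × ℕ, p ∈ antidiagonal M →
        (∑ q ∈ antidiagonal p.2, Tn p.1 * (Qt k q.1 * Qt k' q.2)) =
        Tn p.1 * Qt (k + k') p.2 := by
      intro p _
      rw [← Finset.mul_sum, ih]
    rw [Finset.sum_congr rfl step2, ← Qt_succ]
    congr 1
    omega

theorem Qt_succ' (k m : ℕ) :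
    Qt (k + 1) m = ∑ p ∈ antidiagonal m, Qt k p.1 * Tn p.2 := by
  rw [← Qt_mul k 1 m]
  exact Finset.sum_congr rfl fun p _ => by rw [Qt_one]

theorem QtV (k M : ℕ) :
    Qt (k + 1) (M + 1) =
      Qt k (M + 1) + ∑ p ∈ antidiagonal M, Qt (k + 1) p.1 * Vlin (Tn p.2) := by
  rw [Qt_succ', Finset.Nat.sum_antidiagonal_succ'
    (f := fun p => Qt k p.1 * Tn p.2), Tn_zero, mul_one]
  congr 1
  have step1 : ∀ p : ℕ × ℕ, p ∈ antidiagonal M → Qt k p.1 * Tn (p.2 + 1) =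
      ∑ q ∈ antidiagonal p.2, Qt k p.1 * Tn q.1 * Vlin (Tn q.2) := by
    intro p _
    rw [Tn_succ, Finset.mul_sum]
    exact Finset.sum_congr rfl fun q _ => (mul_assoc _ _ _).symm
  rw [Finset.sum_congr rfl step1,
    ← ad_shuffle M (fun a u v => Qt k a * Tn u * Vlin (Tn v))]
  refine Finset.sum_congr rfl fun p _ => ?_
  rw [← Finset.sum_mul, ← Qt_succ']

end AuxLemmas

open TensorProduct

section TensorLemmas

open Finset

/-- The coefficient `∑_{k} t_k ⊗ Q^{(k)}_{n-k}` in antidiagonal form. -/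
def Acoef (n : ℕ) : HT ⊗[ℂ] HT := ∑ p ∈ antidiagonal n, Tn p.1 ⊗ₜ[ℂ] Qt (p.1 + 1) p.2

def Bcoef (n : ℕ) : HT ⊗[ℂ] HT := ∑ p ∈ antidiagonal n, Tn p.1 ⊗ₜ[ℂ] Qt p.1 p.2

theorem mapV_Bcoef (n : ℕ) :
    (TensorProduct.map Vlin LinearMap.id) (Bcoef n) =
      ∑ p ∈ antidiagonal n, Vlin (Tn p.1) ⊗ₜ[ℂ] Qt p.1 p.2 := by
  rw [Bcoef, map_sum]
  exact Finset.sum_congr rfl fun p _ => by rw [TensorProduct.map_tmul, LinearMap.id_apply]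

theorem AW_eq (n : ℕ) :
    (∑ p ∈ antidiagonal n, Acoef p.1 * (TensorProduct.map Vlin LinearMap.id) (Bcoef p.2)) =
      Bcoef (n + 1) := by
  have expand : ∀ p : ℕ × ℕ, p ∈ antidiagonal n →
      Acoef p.1 * (TensorProduct.map Vlin LinearMap.id) (Bcoef p.2) =
        ∑ q ∈ antidiagonal p.1, ∑ q' ∈ antidiagonal p.2,
          (Tn q.1 * Vlin (Tn q'.1)) ⊗ₜ[ℂ] (Qt (q.1 + 1) q.2 * Qt q'.1 q'.2) := by
    intro p _
    rw [Acoef, mapV_Bcoef, Finset.sum_mul]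
    refine Finset.sum_congr rfl fun q _ => ?_
    rw [Finset.mul_sum]
    exact Finset.sum_congr rfl fun q' _ => Algebra.TensorProduct.tmul_mul_tmul _ _ _ _
  rw [Finset.sum_congr rfl expand,
    ad_shuffle4 n (fun a m b m' => (Tn a * Vlin (Tn b)) ⊗ₜ[ℂ] (Qt (a + 1) m * Qt b m'))]
  have inner : ∀ r : ℕ × ℕ, r ∈ antidiagonal n →
      (∑ p ∈ antidiagonal r.1, ∑ q ∈ antidiagonal r.2,
        (Tn p.1 * Vlin (Tn p.2)) ⊗ₜ[ℂ] (Qt (p.1 + 1) q.1 * Qt p.2 q.2)) =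
        Tn (r.1 + 1) ⊗ₜ[ℂ] Qt (r.1 + 1) r.2 := by
    intro r _
    have h1 : ∀ p : ℕ × ℕ, p ∈ antidiagonal r.1 →
        (∑ q ∈ antidiagonal r.2,
          (Tn p.1 * Vlin (Tn p.2)) ⊗ₜ[ℂ] (Qt (p.1 + 1) q.1 * Qt p.2 q.2)) =
          (Tn p.1 * Vlin (Tn p.2)) ⊗ₜ[ℂ] Qt (r.1 + 1) r.2 := by
      intro p hp
      rw [← TensorProduct.tmul_sum, Qt_mul]
      simp only [Finset.HasAntidiagonal.mem_antidiagonal] at hp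
      congr 2
      omega
    rw [Finset.sum_congr rfl h1, ← TensorProduct.sum_tmul, ← Tn_succ]
  rw [Finset.sum_congr rfl inner, Bcoef, Finset.Nat.sum_antidiagonal_succ
    (f := fun p => Tn p.1 ⊗ₜ[ℂ] Qt p.1 p.2), Qt_zero_succ, TensorProduct.tmul_zero, zero_add]

theorem ACW_eq (n : ℕ) :
    (∑ p ∈ antidiagonal n, Acoef p.1 *
        ((1 : HT) ⊗ₜ[ℂ] Vlin (Tn p.2) + (TensorProduct.map Vlin LinearMap.id) (Bcoef p.2))) =
      Acoef (n + 1) := by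
  simp only [mul_add, Finset.sum_add_distrib]
  rw [AW_eq]
  have expand : ∀ p : ℕ × ℕ, p ∈ antidiagonal n →
      Acoef p.1 * ((1 : HT) ⊗ₜ[ℂ] Vlin (Tn p.2)) =
        ∑ q ∈ antidiagonal p.1, Tn q.1 ⊗ₜ[ℂ] (Qt (q.1 + 1) q.2 * Vlin (Tn p.2)) := by
    intro p _
    rw [Acoef, Finset.sum_mul]
    refine Finset.sum_congr rfl fun q _ => ?_
    rw [Algebra.TensorProduct.tmul_mul_tmul, mul_one]
  rw [Finset.sum_congr rfl expand,
    ad_shuffle n (fun a m j => Tn a ⊗ₜ[ℂ] (Qt (a + 1) m * Vlin (Tn j))),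
    Bcoef, Finset.Nat.sum_antidiagonal_succ'
      (f := fun p => Tn p.1 ⊗ₜ[ℂ] Qt p.1 p.2),
    Acoef, Finset.Nat.sum_antidiagonal_succ'
      (f := fun p => Tn p.1 ⊗ₜ[ℂ] Qt (p.1 + 1) p.2)]
  rw [Qt_zero_right, Qt_zero_right]
  dsimp only
  rw [add_left_comm]
  congr 1
  rw [← Finset.sum_add_distrib]
  refine Finset.sum_congr rfl fun p _ => ?_
  rw [← TensorProduct.tmul_sum, ← TensorProduct.tmul_add]
  congr 1
  rw [QtV, add_comm]

end TensorLemmas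

open TensorProduct in
/-- `Δ^α(t_n) = ∑_{k=0}^n t_k ⊗ Q_{n-k}^{(k)}(t)` and
`δ^α(t_n) = ∑_{k=0}^n t_k ⊗ Q_{n-k}^{(k-1)}(t)`. -/
theorem coproduct_coaction_tn (n : ℕ) :
    (∑ t ∈ treesOf n, (Dd t).1) =
      ∑ k ∈ Finset.range (n + 1), Tn k ⊗ₜ[ℂ] Qt (k + 1) (n - k) ∧
    (∑ t ∈ treesOf n, (Dd t).2) =
      ∑ k ∈ Finset.range (n + 1), Tn k ⊗ₜ[ℂ] Qt k (n - k) := by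
  have hA : ∀ m : ℕ, (∑ k ∈ Finset.range (m + 1), Tn k ⊗ₜ[ℂ] Qt (k + 1) (m - k)) = Acoef m :=
    fun m => (Finset.Nat.sum_antidiagonal_eq_sum_range_succ
      (fun a b => Tn a ⊗ₜ[ℂ] Qt (a + 1) b) m).symm
  have hB : ∀ m : ℕ, (∑ k ∈ Finset.range (m + 1), Tn k ⊗ₜ[ℂ] Qt k (m - k)) = Bcoef m :=
    fun m => (Finset.Nat.sum_antidiagonal_eq_sum_range_succ
      (fun a b => Tn a ⊗ₜ[ℂ] Qt a b) m).symm
  rw [hA, hB]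
  induction n using Nat.strong_induction_on with
  | _ n ih =>
    match n with
    | 0 =>
      rw [treesOf_zero, Finset.sum_singleton, Finset.sum_singleton]
      rw [Acoef, Bcoef, Finset.Nat.antidiagonal_zero, Finset.sum_singleton,
        Finset.sum_singleton]
      simp only [Tn_zero, Qt_zero_right]
      exact ⟨Algebra.TensorProduct.one_def, Algebra.TensorProduct.one_def⟩
    | n + 1 =>
      have ih1 : ∀ m, m ≤ n → (∑ t ∈ treesOf m, (Dd t).1) = Acoef m :=
        fun m hm => (ih m (by omega)).1
      have ih2 : ∀ m, m ≤ n → (∑ t ∈ treesOf m, (Dd t).2) = Bcoef m :=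
        fun m hm => (ih m (by omega)).2
      have hnode : ∀ p : ℕ × ℕ, p ∈ Finset.HasAntidiagonal.antidiagonal n →
          ((∑ r ∈ treesOf p.1, ∑ s ∈ treesOf p.2, (Dd (PBT.node r s)).1) =
            Acoef p.1 * ((1 : HT) ⊗ₜ[ℂ] Vlin (Tn p.2) +
              (TensorProduct.map Vlin LinearMap.id) (Bcoef p.2))) ∧
          ((∑ r ∈ treesOf p.1, ∑ s ∈ treesOf p.2, (Dd (PBT.node r s)).2) =
            Acoef p.1 * (TensorProduct.map Vlin LinearMap.id) (Bcoef p.2)) := by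
        intro p hp
        simp only [Finset.HasAntidiagonal.mem_antidiagonal] at hp
        have hZ2 : (∑ s ∈ treesOf p.2, (TensorProduct.map Vlin LinearMap.id) (Dd s).2) =
            (TensorProduct.map Vlin LinearMap.id) (Bcoef p.2) := by
          rw [← map_sum, ih2 p.2 (by omega)]
        have hZ1 : (∑ s ∈ treesOf p.2,
            (1 : HT) ⊗ₜ[ℂ] (MonoidAlgebra.of ℂ PBT (PBT.node .leaf s))) =
            (1 : HT) ⊗ₜ[ℂ] Vlin (Tn p.2) := by
          rw [← TensorProduct.tmul_sum]
          congr 1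
          rw [Tn, map_sum]
          exact Finset.sum_congr rfl fun s _ => (Vlin_of s).symm
        constructor
        · have step : ∀ r ∈ treesOf p.1, (∑ s ∈ treesOf p.2, (Dd (PBT.node r s)).1) =
              (Dd r).1 * ((1 : HT) ⊗ₜ[ℂ] Vlin (Tn p.2) +
                (TensorProduct.map Vlin LinearMap.id) (Bcoef p.2)) := by
            intro r _
            simp only [Dd]
            rw [← Finset.mul_sum, Finset.sum_add_distrib, hZ1, hZ2]
          rw [Finset.sum_congr rfl step, ← Finset.sum_mul, ih1 p.1 (by omega)]
        · have step : ∀ r ∈ treesOf p.1, (∑ s ∈ treesOf p.2, (Dd (PBT.node r s)).2) =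
              (Dd r).1 * (TensorProduct.map Vlin LinearMap.id) (Bcoef p.2) := by
            intro r _
            simp only [Dd]
            rw [← Finset.mul_sum, hZ2]
          rw [Finset.sum_congr rfl step, ← Finset.sum_mul, ih1 p.1 (by omega)]
      constructor
      · rw [sum_treesOf_succ n (fun t => (Dd t).1),
          Finset.sum_congr rfl fun p hp => (hnode p hp).1, ACW_eq]
      · rw [sum_treesOf_succ n (fun t => (Dd t).2),
          Finset.sum_congr rfl fun p hp => (hnode p hp).2, AW_eq]

end
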